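/- Let Θ^1_0, ..., Θ^N_0 be i.i.d. random initializations in R^{P(a)} each having independent coordinates, where a = (a_0,...,a_D) with D ≥ 3, and let each trajectory evolve by gradient descent Θ^n_t = Θ^n_{t-1} - γ_t G^n_t(Θ^n_{t-1}). Then P(all Θ^n_t lie in the inactive set I_a for all n ∈ {1,...,N} and all t ≥ 0) = [1 - Π_{j=2}^{D-1}(1 - Π_{i=1+k_{j-1}}^{k_j} P(Θ^1_{0,i} < 0))]^N, where k_j = Σ_{i=1}^j a_i(a_{i-1}+1). -/

import Mathlib

open MeasureTheory ProbabilityTheory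

noncomputable section

/-- `layerSum a j = ∑_{i=1}^{j} a_i (a_{i-1}+1)`, the number of parameters in layers `1,…,j`. -/
def layerSum (a : ℕ → ℕ) (j : ℕ) : ℕ := ∑ i ∈ Finset.Icc 1 j, a i * (a (i - 1) + 1)

/-- The affine map of a layer with `m` outputs, `n` inputs, parameters read from `θ`
starting at offset `k` (weights row-wise, then biases). -/
def affApply (m n : ℕ) (θ : ℕ → ℝ) (k : ℕ) (y : Fin n → ℝ) : Fin m → ℝ :=
  fun i => (∑ l : Fin n, θ (k + i.val * n + l.val) * y l) + θ (k + m * n + i.val)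

/-- Forward pass through the first `j` layers of the network, with componentwise ReLU
applied after each affine layer. -/
def fwd (a : ℕ → ℕ) (θ : ℕ → ℝ) (x : Fin (a 0) → ℝ) : (j : ℕ) → Fin (a j) → ℝ
  | 0 => x
  | j + 1 => fun i => max (affApply (a (j + 1)) (a j) θ (layerSum a j) (fwd a θ x j) i) 0

/-- The realization `N_a^θ : ℝ^{a 0} → ℝ^{a D}` of the fully connected feedforward ReLU
network with architecture `a = (a 0, …, a D)` and parameters `θ`:
ReLU after each of the hidden layers `1,…,D-1`, linear read-out layer `D`. -/
def realization (a : ℕ → ℕ) (D : ℕ) (θ : ℕ → ℝ) (x : Fin (a 0) → ℝ) : Fin (a D) → ℝ :=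
  affApply (a D) (a (D - 1)) θ (layerSum a (D - 1)) (fwd a θ x (D - 1))

/-- All weights and biases of layer `j` (the parameter block with indices in
`[layerSum a (j-1), layerSum a j)`) are strictly negative. -/
def layerNeg (a : ℕ → ℕ) (j : ℕ) (θ : ℕ → ℝ) : Prop :=
  ∀ i, layerSum a (j - 1) ≤ i → i < layerSum a j → θ i < 0

/-- The inactive set `I_a`: some hidden layer `j` with `1 < j < D` has all its weights and
biases strictly negative. -/
def Inactive (a : ℕ → ℕ) (D : ℕ) (θ : ℕ → ℝ) : Prop :=
  ∃ j, 1 < j ∧ j < D ∧ layerNeg a j θ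

end

section Aux

variable (a : ℕ → ℕ)

lemma layerSum_mono {p q : ℕ} (h : p ≤ q) : layerSum a p ≤ layerSum a q :=
  Finset.sum_le_sum_of_subset (Finset.Icc_subset_Icc_right h)

lemma layerSum_succ (j : ℕ) :
    layerSum a (j + 1) = layerSum a j + a (j + 1) * (a j + 1) := by
  rw [layerSum, layerSum, Finset.sum_Icc_succ_top (by omega : 1 ≤ j + 1)]
  simp

lemma mul_index_lt {i m n l : ℕ} (hi : i < m) (hl : l < n) : i * n + l < m * n :=
  calc i * n + l < i * n + n := by omega
    _ = (i + 1) * n := by ring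
    _ ≤ m * n := Nat.mul_le_mul_right n hi

lemma weight_index_lt (j : ℕ) {i l : ℕ} (hi : i < a (j + 1)) (hl : l < a j) :
    layerSum a j + i * a j + l < layerSum a (j + 1) := by
  rw [layerSum_succ]
  have := mul_index_lt hi hl
  have : i * a j + l < a (j + 1) * (a j + 1) := by nlinarith
  omega

lemma bias_index_lt (j : ℕ) {i : ℕ} (hi : i < a (j + 1)) :
    layerSum a j + a (j + 1) * a j + i < layerSum a (j + 1) := by
  rw [layerSum_succ]
  nlinarith

lemma fwd_congr (θ θ' : ℕ → ℝ) (x : Fin (a 0) → ℝ) :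
    ∀ j, (∀ i, i < layerSum a j → θ i = θ' i) → fwd a θ x j = fwd a θ' x j := by
  intro j
  induction j with
  | zero => intro _; rfl
  | succ j ih =>
    intro h
    have hlow : ∀ i, i < layerSum a j → θ i = θ' i :=
      fun i hi => h i (hi.trans_le (layerSum_mono a (Nat.le_succ j)))
    funext i
    show max (affApply _ _ θ (layerSum a j) (fwd a θ x j) i) 0
        = max (affApply _ _ θ' (layerSum a j) (fwd a θ' x j) i) 0
    rw [ih hlow]
    unfold affApply
    congr 1
    congr 1
    · exact Finset.sum_congr rfl fun l _ => by
        rw [h _ (weight_index_lt a j i.isLt l.isLt)]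
    · rw [h _ (bias_index_lt a j i.isLt)]

lemma fwd_nonneg (θ : ℕ → ℝ) (x : Fin (a 0) → ℝ) {j : ℕ} (hj : 1 ≤ j) (i : Fin (a j)) :
    0 ≤ fwd a θ x j i := by
  cases j with
  | zero => omega
  | succ p => exact le_max_right _ _

lemma fwd_layerNeg_eq_zero (θ : ℕ → ℝ) (x : Fin (a 0) → ℝ) {j : ℕ} (hj : 2 ≤ j)
    (hneg : layerNeg a j θ) : fwd a θ x j = fun _ => (0 : ℝ) := by
  obtain ⟨p, rfl⟩ : ∃ p, j = p + 1 := ⟨j - 1, by omega⟩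
  have hp : 1 ≤ p := by omega
  have hneg' : ∀ i, layerSum a p ≤ i → i < layerSum a (p + 1) → θ i < 0 := by
    intro i h1 h2
    exact hneg i (by simpa using h1) h2
  funext i
  show max (affApply (a (p + 1)) (a p) θ (layerSum a p) (fwd a θ x p) i) 0 = 0
  refine max_eq_right (le_of_lt ?_)
  unfold affApply
  have hsum : (∑ l : Fin (a p),
      θ (layerSum a p + i.val * a p + l.val) * fwd a θ x p l) ≤ 0 := by
    refine Finset.sum_nonpos fun l _ => ?_
    have h1 : θ (layerSum a p + i.val * a p + l.val) < 0 :=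
      hneg' _ (by omega) (weight_index_lt a p i.isLt l.isLt)
    have h2 : 0 ≤ fwd a θ x p l := fwd_nonneg a θ x hp l
    exact mul_nonpos_of_nonpos_of_nonneg h1.le h2
  have hbias : θ (layerSum a p + a (p + 1) * a p + i.val) < 0 :=
    hneg' _ (by omega) (bias_index_lt a p i.isLt)
  linarith

lemma fwd_agree_above (θ θ' : ℕ → ℝ) (x : Fin (a 0) → ℝ) {j : ℕ} (hj : 2 ≤ j)
    (hneg : layerNeg a j θ) (hneg' : layerNeg a j θ')
    (hagree : ∀ i, layerSum a j ≤ i → θ i = θ' i) :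
    ∀ p, j ≤ p → fwd a θ x p = fwd a θ' x p := by
  intro p hp
  induction p, hp using Nat.le_induction with
  | base => rw [fwd_layerNeg_eq_zero a θ x hj hneg, fwd_layerNeg_eq_zero a θ' x hj hneg']
  | succ p hp ih =>
    have hup : ∀ i, layerSum a p ≤ i → θ i = θ' i :=
      fun i h => hagree i (le_trans (layerSum_mono a hp) h)
    funext i
    show max (affApply _ _ θ (layerSum a p) (fwd a θ x p) i) 0
        = max (affApply _ _ θ' (layerSum a p) (fwd a θ' x p) i) 0
    rw [ih]
    unfold affApply
    congr 1
    congr 1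
    · exact Finset.sum_congr rfl fun l _ => by
        rw [hup _ (le_trans (Nat.le_add_right _ _) (Nat.le_add_right _ _))]
    · rw [hup _ (le_trans (Nat.le_add_right _ _) (Nat.le_add_right _ _))]

lemma realization_agree (θ θ' : ℕ → ℝ) (x : Fin (a 0) → ℝ) {j D : ℕ} (hj : 2 ≤ j)
    (hjD : j < D)
    (hneg : layerNeg a j θ) (hneg' : layerNeg a j θ')
    (hagree : ∀ i, layerSum a j ≤ i → θ i = θ' i) :
    realization a D θ x = realization a D θ' x := by
  have hfwd := fwd_agree_above a θ θ' x hj hneg hneg' hagree (D - 1) (by omega)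
  have hup : ∀ i, layerSum a (D - 1) ≤ i → θ i = θ' i :=
    fun i h => hagree i (le_trans (layerSum_mono a (by omega)) h)
  unfold realization
  rw [hfwd]
  unfold affApply
  funext i
  congr 1
  congr 1
  · funext l
    rw [hup _ (le_trans (Nat.le_add_right _ _) (Nat.le_add_right _ _))]
  · rw [hup _ (le_trans (Nat.le_add_right _ _) (Nat.le_add_right _ _))]

end Aux

/-- With i.i.d. random initializations `Θ 1 0, …, Θ N 0` having independent coordinates,
and each trajectory evolving by gradient descent, the probability that all trajectories
lie in the inactive set `I_a` for all times equals
`(1 - ∏_{j=2}^{D-1} (1 - ∏_{i=k_{j-1}+1}^{k_j} P(Θ¹₀ᵢ < 0)))^N`. -/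
theorem stmt8 {Ω : Type*} [MeasurableSpace Ω] (μ : Measure Ω) [IsProbabilityMeasure μ]
    (a : ℕ → ℕ) (D : ℕ) (hD : 3 ≤ D) (hpos : ∀ i, i ≤ D → 0 < a i) (haD : a D = 1)
    (N : ℕ) (hN : 1 ≤ N) (𝔠 : ℝ → ℝ) (h𝔠 : Continuous 𝔠)
    -- the empirical loss functionals, the losses on parameter space, and the gradients
    (F : ℕ → ℕ → Ω → ((Fin (a 0) → ℝ) → ℝ))
    (L : ℕ → ℕ → (ℕ → ℝ) → Ω → ℝ)
    (hL : ∀ n t θ ω, L n t θ ω = F n t ω (fun x => 𝔠 (realization a D θ x ⟨0, by omega⟩)))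
    (G : ℕ → ℕ → (ℕ → ℝ) → Ω → ℕ → ℝ)
    (hG : ∀ n t (θ : ℕ → ℝ) (ω : Ω) (i : ℕ),
      DifferentiableAt ℝ (fun s => L n t (Function.update θ i s) ω) (θ i) →
      G n t θ ω i = deriv (fun s => L n t (Function.update θ i s) ω) (θ i))
    -- the SGD trajectories
    (γ : ℕ → ℝ) (Θ : ℕ → ℕ → Ω → ℕ → ℝ)
    (hΘ : ∀ n t ω i, Θ n (t + 1) ω i = Θ n t ω i - γ (t + 1) * G n (t + 1) (Θ n t ω) ω i)
    -- the initializations are i.i.d. with independent coordinates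
    (hmeas : ∀ n, Measurable (Θ n 0))
    (hindep : iIndepFun
      (fun (n : Fin N) ω => Θ (n.val + 1) 0 ω) μ)
    (hident : ∀ n, 1 ≤ n → n ≤ N → IdentDistrib (Θ n 0) (Θ 1 0) μ μ)
    (hcoord : iIndepFun
      (fun (i : Fin (layerSum a D)) ω => Θ 1 0 ω i.val) μ) :
    μ {ω | ∀ n, 1 ≤ n → n ≤ N → ∀ t, Inactive a D (Θ n t ω)} =
      (1 - ∏ j ∈ Finset.Icc 2 (D - 1),
        (1 - ∏ i ∈ Finset.Ico (layerSum a (j - 1)) (layerSum a j),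
          μ {ω | Θ 1 0 ω i < 0})) ^ N := by
  classical
  -- Step 1: gradient descent preserves layer negativity
  have key : ∀ n t ω j, 2 ≤ j → j < D → layerNeg a j (Θ n t ω) → layerNeg a j (Θ n (t + 1) ω) := by
    intro n t ω j hj hjD hneg
    have hGzero : ∀ i, layerSum a (j - 1) ≤ i → i < layerSum a j →
        G n (t + 1) (Θ n t ω) ω i = 0 := by
      intro i h1 h2
      set θ := Θ n t ω with hθdef
      have hθi : θ i < 0 := hneg i h1 h2
      have hconst : ∀ s : ℝ, s < 0 → L n (t + 1) (Function.update θ i s) ω = L n (t + 1) θ ω := by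
        intro s hs
        rw [hL, hL]
        congr 1
        funext x
        have hreal : realization a D (Function.update θ i s) x = realization a D θ x := by
          refine realization_agree a _ _ x hj hjD ?_ hneg ?_
          · intro i' hi1 hi2
            rcases eq_or_ne i' i with rfl | hne
            · rw [Function.update_self]; exact hs
            · rw [Function.update_of_ne hne]; exact hneg i' hi1 hi2
          · intro i' hi'
            exact Function.update_of_ne (by omega) _ _
        rw [hreal]
      have hev : (fun s => L n (t + 1) (Function.update θ i s) ω)
          =ᶠ[nhds (θ i)] fun _ => L n (t + 1) θ ω := by
        filter_upwards [Iio_mem_nhds hθi] with s hs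
        exact hconst s hs
      have hdiff : DifferentiableAt ℝ (fun s => L n (t + 1) (Function.update θ i s) ω) (θ i) :=
        (differentiableAt_const _).congr_of_eventuallyEq hev
      rw [hG _ _ _ _ _ hdiff, hev.deriv_eq, deriv_const]
    intro i h1 h2
    rw [hΘ, hGzero i h1 h2]
    simpa using hneg i h1 h2
  have hinv : ∀ n ω, Inactive a D (Θ n 0 ω) → ∀ t, Inactive a D (Θ n t ω) := by
    intro n ω h0 t
    induction t with
    | zero => exact h0
    | succ t ih =>
      obtain ⟨j, hj1, hj2, hneg⟩ := ih
      exact ⟨j, hj1, hj2, key n t ω j (by omega) hj2 hneg⟩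
  -- the inactive set of parameters
  set S : Set (ℕ → ℝ) := {θ | Inactive a D θ} with hSdef
  have hSm : MeasurableSet S := by
    have : S = ⋃ j ∈ Set.Ioo 1 D, ⋂ i ∈ Set.Ico (layerSum a (j - 1)) (layerSum a j),
        {θ : ℕ → ℝ | θ i < 0} := by
      ext θ
      simp only [hSdef, Set.mem_setOf_eq, Inactive, layerNeg, Set.mem_iUnion, Set.mem_iInter,
        Set.mem_Ioo, Set.mem_Ico, Set.mem_setOf_eq]
      constructor
      · rintro ⟨j, h1, h2, h3⟩; exact ⟨j, ⟨h1, h2⟩, fun i hi => h3 i hi.1 hi.2⟩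
      · rintro ⟨j, ⟨h1, h2⟩, h3⟩; exact ⟨j, h1, h2, fun i hi1 hi2 => h3 i ⟨hi1, hi2⟩⟩
    rw [this]
    exact MeasurableSet.biUnion (Set.to_countable _) fun j _ =>
      MeasurableSet.biInter (Set.to_countable _) fun i _ =>
        measurableSet_lt (measurable_pi_apply i) measurable_const
  -- Step 2: the event equals the intersection of initialization events
  have hE : {ω | ∀ n, 1 ≤ n → n ≤ N → ∀ t, Inactive a D (Θ n t ω)}
      = ⋂ n : Fin N, (fun ω => Θ (n.val + 1) 0 ω) ⁻¹' S := by
    ext ω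
    simp only [Set.mem_setOf_eq, Set.mem_iInter, Set.mem_preimage]
    constructor
    · intro h n
      exact h (n.val + 1) (by omega) (Nat.succ_le_of_lt n.isLt) 0
    · intro h n hn1 hnN t
      have h0 : Inactive a D (Θ n 0 ω) := by
        have := h ⟨n - 1, by omega⟩
        simpa [Nat.sub_add_cancel hn1, hSdef] using this
      exact hinv n ω h0 t
  have hprod := hindep.meas_iInter (s := fun n => (fun ω => Θ (n.val + 1) 0 ω) ⁻¹' S)
    (fun n => ⟨S, hSm, rfl⟩)
  rw [hE, hprod]
  have hone : ∀ n : Fin N, μ ((fun ω => Θ (n.val + 1) 0 ω) ⁻¹' S) = μ (Θ 1 0 ⁻¹' S) := by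
    intro n
    exact (hident (n.val + 1) (by omega) (Nat.succ_le_of_lt n.isLt)).measure_mem_eq hSm
  rw [Finset.prod_congr rfl fun n _ => hone n, Finset.prod_const, Finset.card_univ,
    Fintype.card_fin]
  congr 1
  -- Step 3: compute μ (Θ 1 0 ⁻¹' S)
  set K := layerSum a D with hKdef
  have hK : ∀ j, j ≤ D → layerSum a j ≤ K := fun j h => layerSum_mono a h
  set Bs : Fin K → Set Ω := fun i => {ω | Θ 1 0 ω i.val < 0} with hBsdef
  have hBm : ∀ i : Fin K, MeasurableSet (Bs i) :=
    fun i => measurableSet_lt ((measurable_pi_apply i.val).comp (hmeas 1)) measurable_const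
  set blk : ℕ → Finset (Fin K) :=
    fun j => Finset.univ.filter fun i => layerSum a (j - 1) ≤ i.val ∧ i.val < layerSum a j
    with hblkdef
  set A : ℕ → Set Ω := fun j => ⋂ i ∈ blk j, Bs i with hAdef
  have hAm : ∀ j, MeasurableSet (A j) := fun j =>
    (blk j).measurableSet_biInter fun i _ => hBm i
  -- measure of a block event
  have hAμ : ∀ j ∈ Finset.Icc 2 (D - 1),
      μ (A j) = ∏ i ∈ Finset.Ico (layerSum a (j - 1)) (layerSum a j), μ {ω | Θ 1 0 ω i < 0} := by
    intro j hj
    have hjD : j ≤ D := by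
      rw [Finset.mem_Icc] at hj; omega
    rw [hAdef]
    rw [hcoord.meas_biInter (S := blk j) (s := Bs)
      (fun i _ => ⟨Set.Iio 0, measurableSet_Iio, rfl⟩)]
    refine Finset.prod_bij' (fun i _ => i.val)
      (fun i hi => (⟨i, lt_of_lt_of_le (Finset.mem_Ico.1 hi).2 (hK j hjD)⟩ : Fin K))
      ?_ ?_ ?_ ?_ ?_
    · intro i hi
      rw [hblkdef] at hi
      simp only [Finset.mem_filter, Finset.mem_univ, true_and] at hi
      exact Finset.mem_Ico.2 hi
    · intro i hi
      rw [hblkdef]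
      simp only [Finset.mem_filter, Finset.mem_univ, true_and]
      exact Finset.mem_Ico.1 hi
    · intro i hi; rfl
    · intro i hi; rfl
    · intro i hi; rfl
  -- independence of the block events
  set m : Fin K → MeasurableSpace Ω :=
    fun i => MeasurableSpace.comap (fun ω => Θ 1 0 ω i.val) inferInstance with hmdef
  have h_le : ∀ i, m i ≤ ‹MeasurableSpace Ω› :=
    fun i => ((measurable_pi_apply i.val).comp (hmeas 1)).comap_le
  have hAmem : ∀ j, ∀ S2 : Set (Fin K), (↑(blk j) : Set (Fin K)) ⊆ S2 →
      MeasurableSet[⨆ i ∈ S2, m i] (A j) := by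
    intro j S2 hsub2
    rw [hAdef]
    refine MeasurableSet.biInter (blk j).countable_toSet fun i hi => ?_
    have h1 : MeasurableSet[m i] (Bs i) := ⟨Set.Iio 0, measurableSet_Iio, rfl⟩
    exact le_biSup m (hsub2 hi) _ h1
  have hblkdisj : ∀ j j', 2 ≤ j → j ≤ D - 1 → 2 ≤ j' → j' ≤ D - 1 → j ≠ j' →
      ∀ i : Fin K, i ∈ blk j → i ∉ blk j' := by
    intro j j' hj2 hjD hj'2 hj'D hne i hi hi'
    rw [hblkdef] at hi hi'
    simp only [Finset.mem_filter, Finset.mem_univ, true_and] at hi hi'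
    rcases lt_or_gt_of_ne hne with h | h
    · have : layerSum a j ≤ layerSum a (j' - 1) := layerSum_mono a (by omega)
      omega
    · have : layerSum a j' ≤ layerSum a (j - 1) := layerSum_mono a (by omega)
      omega
  have hblock : ∀ T : Finset ℕ, T ⊆ Finset.Icc 2 (D - 1) →
      μ (⋂ j ∈ T, (A j)ᶜ) = ∏ j ∈ T, μ ((A j)ᶜ) := by
    intro T
    induction T using Finset.induction_on with
    | empty => simp
    | @insert j0 T hj0 ih =>
      intro hsub
      have hj0mem : j0 ∈ Finset.Icc 2 (D - 1) := hsub (Finset.mem_insert_self j0 T)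
      have hTsub : T ⊆ Finset.Icc 2 (D - 1) := fun x hx => hsub (Finset.mem_insert_of_mem hx)
      rw [Finset.set_biInter_insert, Finset.prod_insert hj0, ← ih hTsub]
      set S2 : Set (Fin K) := ⋃ j ∈ (T : Set ℕ), ↑(blk j) with hS2def
      have hST : Disjoint (↑(blk j0) : Set (Fin K)) S2 := by
        rw [Set.disjoint_left]
        intro i hi hi2
        rw [hS2def] at hi2
        simp only [Set.mem_iUnion, Finset.mem_coe, Set.mem_setOf_eq] at hi2
        obtain ⟨j, hjT, hij⟩ := hi2
        have hjm := Finset.mem_Icc.1 (hTsub hjT)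
        have hj0m := Finset.mem_Icc.1 hj0mem
        exact hblkdisj j0 j hj0m.1 hj0m.2 hjm.1 hjm.2 (fun h => hj0 (h ▸ hjT)) i hi hij
      have hindep2 := indep_iSup_of_disjoint h_le hcoord.iIndep hST
      rw [Indep_iff] at hindep2
      have h1 : MeasurableSet[⨆ i ∈ (↑(blk j0) : Set (Fin K)), m i] ((A j0)ᶜ) :=
        (hAmem j0 _ subset_rfl).compl
      have h2 : MeasurableSet[⨆ i ∈ S2, m i] (⋂ j ∈ T, (A j)ᶜ) := by
        refine Finset.measurableSet_biInter _ fun j hj => MeasurableSet.compl ?_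
        refine hAmem j S2 ?_
        rw [hS2def]
        exact Set.subset_biUnion_of_mem (u := fun j => (↑(blk j) : Set (Fin K)))
          (Finset.mem_coe.2 hj)
      exact hindep2 _ _ h1 h2
  -- the preimage as a union of block events
  have hpre : Θ 1 0 ⁻¹' S = ⋃ j ∈ Finset.Icc 2 (D - 1), A j := by
    ext ω
    simp only [Set.mem_preimage, hSdef, Set.mem_setOf_eq, Inactive, layerNeg, Set.mem_iUnion,
      hAdef, Set.mem_iInter, hBsdef, Set.mem_setOf_eq, hblkdef, Finset.mem_filter,
      Finset.mem_univ, true_and, Finset.mem_Icc]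
    constructor
    · rintro ⟨j, h1, h2, h3⟩
      exact ⟨j, ⟨by omega, by omega⟩, fun i hi => h3 i.val hi.1 hi.2⟩
    · rintro ⟨j, ⟨h1, h2⟩, h3⟩
      refine ⟨j, by omega, by omega, fun i hi1 hi2 => ?_⟩
      have hiK : i < K := lt_of_lt_of_le hi2 (hK j (by omega))
      exact h3 ⟨i, hiK⟩ ⟨hi1, hi2⟩
  rw [hpre]
  have hUm : MeasurableSet (⋃ j ∈ Finset.Icc 2 (D - 1), A j) :=
    (Finset.Icc 2 (D - 1)).measurableSet_biUnion fun j _ => hAm j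
  have hcompl : (⋃ j ∈ Finset.Icc 2 (D - 1), A j)ᶜ = ⋂ j ∈ Finset.Icc 2 (D - 1), (A j)ᶜ := by
    simp [Set.compl_iUnion]
  have hprod2 : ∏ j ∈ Finset.Icc 2 (D - 1),
      (1 - ∏ i ∈ Finset.Ico (layerSum a (j - 1)) (layerSum a j), μ {ω | Θ 1 0 ω i < 0})
      = 1 - μ (⋃ j ∈ Finset.Icc 2 (D - 1), A j) := by
    rw [← prob_compl_eq_one_sub hUm, hcompl, hblock _ subset_rfl]
    refine Finset.prod_congr rfl fun j hj => ?_
    rw [prob_compl_eq_one_sub (hAm j), hAμ j hj]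
  rw [hprod2, ENNReal.sub_sub_cancel ENNReal.one_ne_top prob_le_one]
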